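/- Suppose a sequence of finite pair sets M_T satisfies (1/T) Σ_{(i,j)∈M_T} ‖X_i − X_j‖₂² → 0 in probability, the leftover (unmatched) index set R_T has |R_T| = o_p(√T), X_1, X_2, … are IID with E[‖X_1‖₂⁴] < ∞, and M_T* extends M_T by arbitrarily pairing the leftover indices. Then (1/T) Σ_{(i,j)∈M_T*} ‖X_i − X_j‖₂² → 0 in probability as well. -/

import Mathlib

open MeasureTheory ProbabilityTheory Filter Finset

/-- If the matched pairs `M_T` satisfy
`(1/T) Σ_{(i,j)∈M_T} ‖X_i−X_j‖² → 0` in probability, the unmatched index set has cardinality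
`o_p(√T)`, the `X_i` are IID with `E[‖X_1‖⁴] < ∞`, and `M_T*` extends `M_T` by arbitrarily
pairing the leftover indices (leaving at most one unmatched), then
`(1/T) Σ_{(i,j)∈M_T*} ‖X_i−X_j‖² → 0` in probability as well. -/
theorem augmented_pairing_distance_condition
    {Ω : Type*} [MeasureSpace Ω] [IsProbabilityMeasure (ℙ : Measure Ω)]
    {d : ℕ} (X : ℕ → Ω → EuclideanSpace ℝ (Fin d))
    (M Mstar : ℕ → Ω → Finset (ℕ × ℕ))
    (hmeas : ∀ i, Measurable (X i))
    (hindep : iIndepFun X ℙ)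
    (hident : ∀ i, IdentDistrib (X i) (X 0) ℙ ℙ)
    (hmom : Integrable (fun ω => ‖X 0 ω‖ ^ 4) ℙ)
    -- pairs consist of distinct indices in {0,…,T−1}, pairwise disjoint
    (hrange : ∀ T ω, ∀ p ∈ Mstar T ω, p.1 < T ∧ p.2 < T ∧ p.1 ≠ p.2)
    (hdisj : ∀ T ω, ∀ p ∈ Mstar T ω, ∀ q ∈ Mstar T ω, p ≠ q →
      ({p.1, p.2} : Finset ℕ) ∩ ({q.1, q.2} : Finset ℕ) = ∅)
    -- `Mstar` extends `M` and leaves at most one index unmatched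
    (hsub : ∀ T ω, M T ω ⊆ Mstar T ω)
    (hleft : ∀ T ω,
      ((Finset.range T) \ (Mstar T ω).biUnion (fun p => {p.1, p.2})).card ≤ 1)
    -- intra-pair distance condition for `M`
    (hconv : ∀ ε > (0 : ℝ), Tendsto (fun T : ℕ =>
      (ℙ : Measure Ω) {ω | ε < (1 / (T : ℝ)) *
        ∑ p ∈ M T ω, ‖X p.1 ω - X p.2 ω‖ ^ 2}) atTop (nhds 0))
    -- the unmatched set of `M` has size `o_p(√T)`
    (hres : ∀ ε > (0 : ℝ), Tendsto (fun T : ℕ =>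
      (ℙ : Measure Ω) {ω | ε * Real.sqrt T <
        (((Finset.range T) \ (M T ω).biUnion (fun p => {p.1, p.2})).card : ℝ)})
      atTop (nhds 0)) :
    ∀ ε > (0 : ℝ), Tendsto (fun T : ℕ =>
      (ℙ : Measure Ω) {ω | ε < (1 / (T : ℝ)) *
        ∑ p ∈ Mstar T ω, ‖X p.1 ω - X p.2 ω‖ ^ 2}) atTop (nhds 0) := by
  classical
  intro ε hε
  -- the fourth-power process
  set Y : ℕ → Ω → ℝ := fun i ω => ‖X i ω‖ ^ 4 with hYdef
  have hg : Measurable fun x : EuclideanSpace ℝ (Fin d) => ‖x‖ ^ 4 :=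
    measurable_norm.pow_const 4
  have hYindep : Pairwise (Function.onFun (IndepFun · · ℙ) Y) := fun i j hij =>
    (hindep.indepFun hij).comp hg hg
  have hYident : ∀ i, IdentDistrib (Y i) (Y 0) ℙ ℙ := fun i => (hident i).comp hg
  have hYint : Integrable (Y 0) ℙ := hmom
  have hlln := strong_law_ae Y hYint hYindep hYident
  set m : ℝ := ∫ ω, Y 0 ω with hm
  have hm0 : 0 ≤ m := integral_nonneg fun ω => by positivity
  set C : ℝ := m + 1 with hCdef
  have hC0 : 0 < C := by linarith
  -- convergence in measure of the empirical fourth moments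
  have hmeasS : ∀ T : ℕ,
      AEStronglyMeasurable (fun ω => (T : ℝ)⁻¹ • ∑ i ∈ range T, Y i ω) ℙ := by
    intro T
    exact ((Finset.measurable_sum _ fun i _ =>
      (hmeas i).norm.pow_const 4).const_smul ((T : ℝ)⁻¹)).aestronglyMeasurable
  have hinm : TendstoInMeasure ℙ (fun (T : ℕ) ω => (T : ℝ)⁻¹ • ∑ i ∈ range T, Y i ω)
      atTop (fun _ => m) := tendstoInMeasure_of_tendsto_ae hmeasS hlln
  have hB2 : Tendsto (fun T : ℕ => (ℙ : Measure Ω)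
      {ω | C * T < ∑ i ∈ range T, Y i ω}) atTop (nhds 0) := by
    have h1 := hinm 1 one_pos
    refine tendsto_of_tendsto_of_tendsto_of_le_of_le' tendsto_const_nhds h1
      (Eventually.of_forall fun T => by positivity) ?_
    filter_upwards [eventually_ge_atTop 1] with T hT
    apply measure_mono
    intro ω hω
    simp only [Set.mem_setOf_eq] at hω ⊢
    have hT0 : (0 : ℝ) < T := by exact_mod_cast hT
    have hx : C < (T : ℝ)⁻¹ * ∑ i ∈ range T, Y i ω := by
      have := mul_lt_mul_of_pos_left hω (inv_pos.2 hT0)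
      calc C = (T : ℝ)⁻¹ * (C * T) := by field_simp
      _ < _ := this
    have : (1 : ℝ) ≤ |(T : ℝ)⁻¹ * (∑ i ∈ range T, Y i ω) - m| := by
      have : (1 : ℝ) ≤ (T : ℝ)⁻¹ * (∑ i ∈ range T, Y i ω) - m := by
        simp only [hCdef] at hx; linarith
      exact this.trans (le_abs_self _)
    simpa [edist_dist, Real.dist_eq, smul_eq_mul] using ENNReal.ofReal_le_ofReal this
  -- eventual threshold
  have hPT : ∀ᶠ T : ℕ in atTop,
      2 * Real.sqrt (Real.sqrt T * (C * T)) ≤ ε / 2 * T := by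
    have : ∀ᶠ T : ℕ in atTop, ((16 * C / ε ^ 2) ^ 2 : ℝ) ≤ T := by
      have := tendsto_natCast_atTop_atTop (R := ℝ)
      exact this.eventually_ge_atTop _
    filter_upwards [this, eventually_ge_atTop 1] with T hTK hT1
    have hT0 : (1 : ℝ) ≤ T := by exact_mod_cast hT1
    have hK : (16 * C / ε ^ 2 : ℝ) ≤ Real.sqrt T := by
      have := Real.sqrt_le_sqrt hTK
      rwa [Real.sqrt_sq (by positivity)] at this
    have hsq : Real.sqrt T * Real.sqrt T = (T : ℝ) :=
      Real.mul_self_sqrt (by positivity)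
    have hs1 : (1 : ℝ) ≤ Real.sqrt T := by
      rw [show (1 : ℝ) = Real.sqrt 1 by simp]
      exact Real.sqrt_le_sqrt hT0
    have h16 : 16 * C ≤ ε ^ 2 * Real.sqrt T := by
      have := mul_le_mul_of_nonneg_left hK (le_of_lt (by positivity : (0:ℝ) < ε ^ 2))
      calc (16 : ℝ) * C = ε ^ 2 * (16 * C / ε ^ 2) := by
            rw [eq_comm, mul_div_assoc', mul_comm (ε ^ 2), mul_div_assoc,
              div_self (by positivity : (ε : ℝ) ^ 2 ≠ 0), mul_one]
      _ ≤ _ := this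
    have hA : Real.sqrt T * (C * T) ≤ (ε / 4 * T) ^ 2 := by
      have h1 : 16 * C * (Real.sqrt T * T) ≤ ε ^ 2 * Real.sqrt T * (Real.sqrt T * T) := by
        have := mul_le_mul_of_nonneg_right h16
          (mul_nonneg (Real.sqrt_nonneg (T : ℝ)) (by positivity : (0:ℝ) ≤ (T : ℝ)))
        linarith [this]
      calc Real.sqrt T * (C * T) = (16 * C * (Real.sqrt T * T)) / 16 := by ring
      _ ≤ (ε ^ 2 * Real.sqrt T * (Real.sqrt T * T)) / 16 :=
          div_le_div_of_nonneg_right h1 (by norm_num)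
      _ = (ε ^ 2 * ((T : ℝ) * T)) / 16 := by
          linear_combination (ε ^ 2 * (T : ℝ) / 16) * hsq
      _ = (ε / 4 * T) ^ 2 := by ring
    calc 2 * Real.sqrt (Real.sqrt T * (C * T))
        ≤ 2 * Real.sqrt ((ε / 4 * T) ^ 2) := by
          have := Real.sqrt_le_sqrt hA; linarith
    _ = 2 * (ε / 4 * T) := by rw [Real.sqrt_sq (by positivity)]
    _ = ε / 2 * T := by ring
  -- assemble
  refine tendsto_of_tendsto_of_tendsto_of_le_of_le' tendsto_const_nhds
    (h := fun T : ℕ =>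
      (ℙ : Measure Ω) {ω | ε / 2 < (1 / (T : ℝ)) *
        ∑ p ∈ M T ω, ‖X p.1 ω - X p.2 ω‖ ^ 2}
      + (ℙ : Measure Ω) {ω | 1 * Real.sqrt T <
        (((Finset.range T) \ (M T ω).biUnion (fun p => {p.1, p.2})).card : ℝ)}
      + (ℙ : Measure Ω) {ω | C * T < ∑ i ∈ range T, Y i ω}) ?_
    (Eventually.of_forall fun T => by positivity) ?_
  · have h0 : ((0 : ENNReal) + 0 + 0) = 0 := by simp
    rw [← h0]
    exact (((hconv (ε / 2) (by positivity)).add (hres 1 one_pos)).add hB2)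
  · filter_upwards [hPT, eventually_ge_atTop 1] with T hPT hT1
    refine le_trans (measure_mono ?_) (le_trans (measure_union_le _ _)
      (add_le_add_left (measure_union_le _ _) _))
    -- set inclusion
    intro ω hω
    by_contra hcon
    simp only [Set.mem_union, Set.mem_setOf_eq, not_or, not_lt] at hcon
    obtain ⟨⟨hA, hB1⟩, hB2'⟩ := hcon
    simp only [Set.mem_setOf_eq] at hω
    have hT0 : (0 : ℝ) < T := by exact_mod_cast hT1
    -- notation
    set D : Finset (ℕ × ℕ) := Mstar T ω \ M T ω with hD
    set R : Finset ℕ := (Finset.range T) \ (M T ω).biUnion (fun p => {p.1, p.2}) with hR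
    have hDstar : ∀ p ∈ D, p ∈ Mstar T ω := fun p hp => (Finset.mem_sdiff.mp hp).1
    -- split the sum
    have hsplit : ∑ p ∈ Mstar T ω, ‖X p.1 ω - X p.2 ω‖ ^ 2
        = (∑ p ∈ D, ‖X p.1 ω - X p.2 ω‖ ^ 2)
          + ∑ p ∈ M T ω, ‖X p.1 ω - X p.2 ω‖ ^ 2 :=
      (Finset.sum_sdiff (hsub T ω)).symm
    -- bound each extra pair by the norms
    have h2 : ∑ p ∈ D, ‖X p.1 ω - X p.2 ω‖ ^ 2
        ≤ ∑ p ∈ D, (2 * ‖X p.1 ω‖ ^ 2 + 2 * ‖X p.2 ω‖ ^ 2) := by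
      refine Finset.sum_le_sum fun p hp => ?_
      have h := norm_sub_le (X p.1 ω) (X p.2 ω)
      nlinarith [norm_nonneg (X p.1 ω), norm_nonneg (X p.2 ω),
        norm_nonneg (X p.1 ω - X p.2 ω), sq_nonneg (‖X p.1 ω‖ - ‖X p.2 ω‖)]
    -- convert to sum over indices
    have hpd : Set.PairwiseDisjoint (↑D) (fun p : ℕ × ℕ => ({p.1, p.2} : Finset ℕ)) := by
      intro p hp q hq hpq
      exact Finset.disjoint_iff_inter_eq_empty.mpr
        (hdisj T ω p (hDstar p (Finset.mem_coe.mp hp)) q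
          (hDstar q (Finset.mem_coe.mp hq)) hpq)
    have h3 : ∑ p ∈ D, (2 * ‖X p.1 ω‖ ^ 2 + 2 * ‖X p.2 ω‖ ^ 2)
        = 2 * ∑ i ∈ D.biUnion (fun p => {p.1, p.2}), ‖X i ω‖ ^ 2 := by
      rw [Finset.sum_biUnion hpd, Finset.mul_sum]
      refine Finset.sum_congr rfl fun p hp => ?_
      rw [Finset.sum_pair (hrange T ω p (hDstar p hp)).2.2]
      ring
    -- the extra indices lie in the leftover set of M
    have h4 : D.biUnion (fun p => {p.1, p.2}) ⊆ R := by
      intro i hi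
      obtain ⟨p, hp, hip⟩ := Finset.mem_biUnion.mp hi
      have hpstar := hDstar p hp
      have hiT : i < T := by
        rcases Finset.mem_insert.mp hip with h | h
        · exact h ▸ (hrange T ω p hpstar).1
        · exact (Finset.mem_singleton.mp h) ▸ (hrange T ω p hpstar).2.1
      rw [hR, Finset.mem_sdiff]
      refine ⟨Finset.mem_range.mpr hiT, fun hiM => ?_⟩
      obtain ⟨q, hq, hiq⟩ := Finset.mem_biUnion.mp hiM
      have hpq : p ≠ q := fun h => (Finset.mem_sdiff.mp hp).2 (h ▸ hq)
      have : i ∈ ({p.1, p.2} : Finset ℕ) ∩ ({q.1, q.2} : Finset ℕ) :=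
        Finset.mem_inter.mpr ⟨hip, hiq⟩
      rw [hdisj T ω p hpstar q (hsub T ω hq) hpq] at this
      exact absurd this (Finset.notMem_empty i)
    have h5 : ∑ i ∈ D.biUnion (fun p => {p.1, p.2}), ‖X i ω‖ ^ 2
        ≤ ∑ i ∈ R, ‖X i ω‖ ^ 2 :=
      Finset.sum_le_sum_of_subset_of_nonneg h4 (fun i _ _ => by positivity)
    -- Cauchy–Schwarz
    have h6 : (∑ i ∈ R, ‖X i ω‖ ^ 2) ^ 2 ≤ (R.card : ℝ) * ∑ i ∈ R, Y i ω := by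
      have := sq_sum_le_card_mul_sum_sq (s := R) (f := fun i => ‖X i ω‖ ^ 2)
      calc (∑ i ∈ R, ‖X i ω‖ ^ 2) ^ 2 ≤ (R.card : ℝ) * ∑ i ∈ R, (‖X i ω‖ ^ 2) ^ 2 := this
      _ = (R.card : ℝ) * ∑ i ∈ R, Y i ω := by
        congr 1; exact Finset.sum_congr rfl fun i _ => by rw [hYdef]; ring
    have h7 : ∑ i ∈ R, Y i ω ≤ ∑ i ∈ range T, Y i ω := by
      refine Finset.sum_le_sum_of_subset_of_nonneg ?_ (fun i _ _ => by positivity)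
      rw [hR]; exact Finset.sdiff_subset
    -- combine with the good-event bounds
    have hRY0 : (0 : ℝ) ≤ ∑ i ∈ R, Y i ω :=
      Finset.sum_nonneg fun i _ => by positivity
    have hbound : (R.card : ℝ) * ∑ i ∈ R, Y i ω ≤ Real.sqrt T * (C * T) := by
      refine mul_le_mul ?_ (h7.trans hB2') hRY0 (Real.sqrt_nonneg _)
      simpa using hB1
    have hs : (0 : ℝ) ≤ ∑ i ∈ R, ‖X i ω‖ ^ 2 :=
      Finset.sum_nonneg fun i _ => by positivity
    have hkey : ∑ i ∈ R, ‖X i ω‖ ^ 2 ≤ Real.sqrt (Real.sqrt T * (C * T)) := by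
      rw [← Real.sqrt_sq hs]
      exact Real.sqrt_le_sqrt (h6.trans hbound)
    -- conclude
    have hDle : ∑ p ∈ D, ‖X p.1 ω - X p.2 ω‖ ^ 2 ≤ ε / 2 * T := by
      calc ∑ p ∈ D, ‖X p.1 ω - X p.2 ω‖ ^ 2
          ≤ 2 * ∑ i ∈ D.biUnion (fun p => {p.1, p.2}), ‖X i ω‖ ^ 2 := by
            rw [← h3]; exact h2
      _ ≤ 2 * ∑ i ∈ R, ‖X i ω‖ ^ 2 := by linarith
      _ ≤ 2 * Real.sqrt (Real.sqrt T * (C * T)) := by linarith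
      _ ≤ ε / 2 * T := hPT
    have hMle : ∑ p ∈ M T ω, ‖X p.1 ω - X p.2 ω‖ ^ 2 ≤ ε / 2 * T := by
      have := mul_le_mul_of_nonneg_left hA (le_of_lt hT0)
      calc ∑ p ∈ M T ω, ‖X p.1 ω - X p.2 ω‖ ^ 2
          = (T : ℝ) * ((1 / T) * ∑ p ∈ M T ω, ‖X p.1 ω - X p.2 ω‖ ^ 2) := by
            field_simp
      _ ≤ (T : ℝ) * (ε / 2) := this
      _ = ε / 2 * T := by ring
    have htotal : ∑ p ∈ Mstar T ω, ‖X p.1 ω - X p.2 ω‖ ^ 2 ≤ ε * T := by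
      rw [hsplit]; linarith
    have : (1 / (T : ℝ)) * ∑ p ∈ Mstar T ω, ‖X p.1 ω - X p.2 ω‖ ^ 2 ≤ ε := by
      have h := mul_le_mul_of_nonneg_left htotal
        (le_of_lt (by positivity : (0 : ℝ) < 1 / T))
      calc (1 / (T : ℝ)) * ∑ p ∈ Mstar T ω, ‖X p.1 ω - X p.2 ω‖ ^ 2
          ≤ (1 / (T : ℝ)) * (ε * T) := h
      _ = ε := by field_simp
    linarith
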